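/- Let C be a small category and X an object of C. Under the composite of the canonical equivalence between the slice category Over(y X) of Pre(C) over y X and the category of presheaves on the costructured-arrow category CostructuredArrow(y, y X), together with the canonical equivalence of CostructuredArrow(y, y X) with the slice category C/X (sending A ⟶ X to y A ⟶ y X), a presheaf on C/X is an ind-object of C/X if and only if the underlying presheaf on C of the corresponding object of Over(y X) is an ind-object of C. -/

import Mathlib

open CategoryTheory CategoryTheory.Limits

universe u

/-- The canonical equivalence between the slice category `C/X` and the category of
costructured arrows `CostructuredArrow yoneda (yoneda.obj X)`, sending `A ⟶ X` to
`yoneda.obj A ⟶ yoneda.obj X`. -/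
noncomputable def sliceEquivCostructuredArrow {C : Type u} [SmallCategory C] (X : C) :
    Over X ≌ CostructuredArrow yoneda (yoneda.obj X) :=
  (CostructuredArrow.post (𝟭 C) yoneda X ⋙
    CostructuredArrow.pre (𝟭 C) yoneda (yoneda.obj X)).asEquivalence

/-- The composite equivalence `Over (yoneda.obj X) ≌ ((Over X)ᵒᵖ ⥤ Type u)` obtained from
`overEquivPresheafCostructuredArrow` together with the equivalence
`Over X ≌ CostructuredArrow yoneda (yoneda.obj X)`. -/
noncomputable def overYonedaEquivPresheafSlice {C : Type u} [SmallCategory C] (X : C) :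
    Over (yoneda.obj X) ≌ ((Over X)ᵒᵖ ⥤ Type u) :=
  (overEquivPresheafCostructuredArrow (yoneda.obj X)).trans
    (Equivalence.congrLeft (sliceEquivCostructuredArrow X).op.symm)

section General

variable {D : Type*} [Category D] {T : Type*} [Category T] (F : D ⥤ T) {A : T} (Y : Over A)

@[simps]
def toOverCostructured :
    CostructuredArrow (CostructuredArrow.toOver F A) Y ⥤ CostructuredArrow F Y.left where
  obj c := CostructuredArrow.mk c.hom.left
  map {c d} f := CostructuredArrow.homMk f.left.left (by
    have h := congrArg CommaMorphism.left (CostructuredArrow.w f)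
    exact h)

instance : (toOverCostructured F Y).Faithful where
  map_injective {c d} f g h := by
    apply CostructuredArrow.hom_ext
    apply CostructuredArrow.hom_ext
    have h' := congrArg CommaMorphism.left h
    exact h'

instance : (toOverCostructured F Y).Full where
  map_surjective {c d} φ := by
    have h3 : F.map φ.left ≫ d.hom.left = c.hom.left := CostructuredArrow.w φ
    refine ⟨CostructuredArrow.homMk (CostructuredArrow.homMk φ.left ?_) ?_, ?_⟩
    · show F.map φ.left ≫ ((CostructuredArrow.toOver F A).obj d.left).hom
        = ((CostructuredArrow.toOver F A).obj c.left).hom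
      rw [← Over.w c.hom, ← Over.w d.hom]
      exact (Category.assoc _ _ _).symm.trans (congrArg (· ≫ Y.hom) h3)
    · ext
      rw [Over.comp_left]
      exact h3
    · ext
      rfl

instance : (toOverCostructured F Y).EssSurj where
  mem_essImage c := by
    refine ⟨CostructuredArrow.mk (Y := CostructuredArrow.mk (c.hom ≫ Y.hom))
      (Over.homMk c.hom : (CostructuredArrow.toOver F A).obj
        (CostructuredArrow.mk (c.hom ≫ Y.hom)) ⟶ Y), ⟨CostructuredArrow.isoMk (Iso.refl _) ?_⟩⟩
    simp [toOverCostructured]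
    rfl

instance : (toOverCostructured F Y).IsEquivalence where

end General

noncomputable section Main

namespace IndSliceAux

variable {C : Type u} [SmallCategory C] (X : C)

/-- The slice-to-costructured-arrow comparison functor. -/
abbrev Sl : Over X ⥤ CostructuredArrow yoneda (yoneda.obj X) :=
  (sliceEquivCostructuredArrow X).functor

abbrev Kf : Over X ⥤ Over (yoneda.obj X) :=
  Sl X ⋙ CostructuredArrow.toOver yoneda (yoneda.obj X)

def ff : (Sl X).FullyFaithful := Functor.FullyFaithful.ofFullyFaithful _

def δ₂ : Sl X ⋙ yoneda ⋙ (Functor.whiskeringLeft _ _ _).obj (Sl X).op ≅ (yoneda : Over X ⥤ _) :=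
  Functor.isoWhiskerLeft (Sl X) (Functor.isoWhiskerRight uliftYonedaIsoYoneda.{u}.symm _) ≪≫
    (ff X).compUliftYonedaCompWhiskeringLeft ≪≫ uliftYonedaIsoYoneda.{u}

def δ : (Sl X ⋙ CostructuredArrow.toOver yoneda (yoneda.obj X)) ⋙
    (overYonedaEquivPresheafSlice X).functor ≅ (yoneda : Over X ⥤ _) :=
  Functor.isoWhiskerLeft (Sl X) (Functor.isoWhiskerRight
    (CostructuredArrow.toOverCompOverEquivPresheafCostructuredArrow (yoneda.obj X))
    ((Functor.whiskeringLeft _ _ _).obj (Sl X).op)) ≪≫ δ₂ X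

def θ : (yoneda : Over X ⥤ _) ⋙ (overYonedaEquivPresheafSlice X).inverse ≅ Kf X :=
  Functor.isoWhiskerRight (δ X).symm (overYonedaEquivPresheafSlice X).inverse ≪≫
    Functor.associator (Kf X) (overYonedaEquivPresheafSlice X).functor
      (overYonedaEquivPresheafSlice X).inverse ≪≫
    Functor.isoWhiskerLeft (Kf X) (overYonedaEquivPresheafSlice X).unitIso.symm ≪≫
    Functor.rightUnitor (Kf X)

def E (P : (Over X)ᵒᵖ ⥤ Type u) :
    CostructuredArrow yoneda P ≌
      CostructuredArrow yoneda ((overYonedaEquivPresheafSlice X).inverse.obj P).left :=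
  (CostructuredArrow.post yoneda (overYonedaEquivPresheafSlice X).inverse P).asEquivalence.trans <|
    (Comma.mapLeftIso _ (θ X)).trans <|
      ((CostructuredArrow.pre (Sl X) (CostructuredArrow.toOver yoneda (yoneda.obj X))
        ((overYonedaEquivPresheafSlice X).inverse.obj P)).asEquivalence.trans
        (toOverCostructured yoneda ((overYonedaEquivPresheafSlice X).inverse.obj P)).asEquivalence)

end IndSliceAux

end Main

theorem isIndObject_slice_iff {C : Type u} [SmallCategory C] (X : C)
    (P : (Over X)ᵒᵖ ⥤ Type u) :
    IsIndObject P ↔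
      IsIndObject ((Over.forget (yoneda.obj X)).obj
        ((overYonedaEquivPresheafSlice X).inverse.obj P)) := by
  rw [isIndObject_iff, isIndObject_iff]
  have E := IndSliceAux.E X P
  constructor
  · rintro ⟨h1, h2⟩
    exact ⟨IsFiltered.of_equivalence E,
      @finallySmall_of_final_of_finallySmall _ _ _ _ h2 E.functor
        (Functor.final_of_adjunction E.symm.toAdjunction)⟩
  · rintro ⟨h1, h2⟩
    haveI : IsFiltered
        (CostructuredArrow yoneda ((overYonedaEquivPresheafSlice X).inverse.obj P).left) := h1
    haveI : FinallySmall.{u}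
        (CostructuredArrow yoneda ((overYonedaEquivPresheafSlice X).inverse.obj P).left) := h2
    exact ⟨IsFiltered.of_equivalence E.symm,
      finallySmall_of_final_of_finallySmall E.symm.functor⟩
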